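/- arXiv:1702.00342 — 5 statements merged into one kernel-verified Lean document; each statement's English description precedes it below -/
import Mathlib

section
/- Let K be a compact Hausdorff topological group with Haar measure μ, let Ω ⊆ K be an open symmetric (Ω = Ω⁻¹) neighborhood of the identity, and let A ≤ K be a subgroup. Let B ≤ A be the subgroup generated by A ∩ Ω·Ω. Then distinct left B-cosets in A have representatives a, a' for which the translates a·Ω and a'·Ω are disjoint; consequently the index of B in A is at most μ(K)/μ(Ω). In particular, [A : B] is finite and bounded by μ(K)/μ(Ω). -/
open scoped Pointwise

/-- Let `K` be a compact Hausdorff topological group with Haar measure `μ`, let `Ω` be an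
open symmetric neighborhood of the identity, `A ≤ K` a subgroup, and `B` the subgroup
generated by `A ∩ Ω·Ω`. Then any representatives `a, a'` of distinct left `B`-cosets in `A`
have disjoint translates `a·Ω` and `a'·Ω`; consequently the index `[A : B]` is finite and
at most `μ(K)/μ(Ω)`. -/
theorem stmt3 {K : Type*} [Group K] [TopologicalSpace K] [IsTopologicalGroup K]
    [CompactSpace K] [T2Space K] [MeasurableSpace K] [BorelSpace K]
    (μ : MeasureTheory.Measure K) [μ.IsHaarMeasure]
    (Ω : Set K) (hΩopen : IsOpen Ω) (hΩone : (1 : K) ∈ Ω) (hΩsymm : Ω⁻¹ = Ω)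
    (A B : Subgroup K) (hB : B = Subgroup.closure ((A : Set K) ∩ (Ω * Ω))) :
    (∀ a ∈ A, ∀ a' ∈ A, a⁻¹ * a' ∉ B → Disjoint (a • Ω) (a' • Ω)) ∧
      B.relIndex A ≠ 0 ∧ (B.relIndex A : ENNReal) ≤ μ Set.univ / μ Ω := by
  have hdisj : ∀ a ∈ A, ∀ a' ∈ A, a⁻¹ * a' ∉ B → Disjoint (a • Ω) (a' • Ω) := by
    intro a ha a' ha' hnot
    rw [Set.disjoint_left]
    rintro x hx hx'
    obtain ⟨ω, hω, rfl⟩ := hx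
    obtain ⟨ω', hω', hEq⟩ := hx'
    apply hnot
    have key : a⁻¹ * a' = ω * ω'⁻¹ := by
      have : a' * ω' = a * ω := hEq
      rw [inv_mul_eq_iff_eq_mul, ← mul_assoc, ← this, mul_assoc]
      simp
    rw [hB]
    apply Subgroup.subset_closure
    refine ⟨A.mul_mem (A.inv_mem ha) ha', ?_⟩
    rw [key]
    exact Set.mul_mem_mul hω (by rw [← hΩsymm]; simpa using hω')
  refine ⟨hdisj, ?_⟩
  -- measure setup
  have hμΩ : μ Ω ≠ 0 := (hΩopen.measure_ne_zero μ ⟨1, hΩone⟩)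
  have hμtop : μ Set.univ ≠ ⊤ := MeasureTheory.measure_ne_top μ _
  set Q := A ⧸ B.subgroupOf A with hQ
  have hne : ∀ q q' : Q, q ≠ q' →
      ((Quotient.out q : A) : K)⁻¹ * ((Quotient.out q' : A) : K) ∉ B := by
    intro q q' hqq hmem
    apply hqq
    have : (Quotient.out q)⁻¹ * Quotient.out q' ∈ B.subgroupOf A := by
      rwa [Subgroup.mem_subgroupOf]
    have h2 := (QuotientGroup.eq (s := B.subgroupOf A)).mpr this
    rwa [QuotientGroup.out_eq', QuotientGroup.out_eq'] at h2
  set f : Q → Set K := fun q => ((Quotient.out q : A) : K) • Ω with hf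
  have hmeas : ∀ q : Q, MeasurableSet (f q) := fun q =>
    (hΩopen.smul _).measurableSet
  have hμf : ∀ q : Q, μ (f q) = μ Ω := fun q =>
    show μ (((Quotient.out q : A) : K) • Ω) = μ Ω from MeasureTheory.measure_smul μ _ _
  have hpd : ∀ q q' : Q, q ≠ q' → Disjoint (f q) (f q') := by
    intro q q' h
    exact hdisj _ (Quotient.out q).2 _ (Quotient.out q').2 (hne q q' h)
  have hcard : ∀ s : Finset Q, (s.card : ENNReal) * μ Ω ≤ μ Set.univ := by
    intro s
    have h1 : μ (⋃ q ∈ s, f q) = ∑ q ∈ s, μ (f q) := by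
      apply MeasureTheory.measure_biUnion_finset
      · intro q hq q' hq' h
        exact hpd q q' h
      · intro q _; exact hmeas q
    calc (s.card : ENNReal) * μ Ω = ∑ q ∈ s, μ (f q) := by
          simp [hμf, Finset.sum_const, nsmul_eq_mul]
      _ = μ (⋃ q ∈ s, f q) := h1.symm
      _ ≤ μ Set.univ := MeasureTheory.measure_mono (Set.subset_univ _)
  have hfin : Finite Q := by
    by_contra hinf
    rw [not_finite_iff_infinite] at hinf
    obtain ⟨n, hn⟩ := ENNReal.exists_nat_gt (ENNReal.div_lt_top hμtop hμΩ).ne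
    obtain ⟨s, hs⟩ := Infinite.exists_subset_card_eq Q n
    have := hcard s
    rw [hs] at this
    have : (n : ENNReal) ≤ μ Set.univ / μ Ω :=
      (ENNReal.le_div_iff_mul_le (Or.inl hμΩ) (Or.inr hμtop)).mpr this
    exact absurd this (not_le.mpr hn)
  haveI := hfin
  haveI : Fintype Q := Fintype.ofFinite Q
  have hrel : B.relIndex A = Nat.card Q := by
    rw [Subgroup.relIndex, Subgroup.index]
  constructor
  · rw [hrel]
    exact Nat.card_ne_zero.mpr ⟨⟨QuotientGroup.mk 1⟩, hfin⟩
  · rw [hrel, Nat.card_eq_fintype_card, ← Finset.card_univ]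
    refine (ENNReal.le_div_iff_mul_le (Or.inl hμΩ) (Or.inr hμtop)).mpr ?_
    exact hcard Finset.univ
end

section
/- Let S be a finite subset of GL_m(ℂ) and let γ belong to the subgroup generated by S. If γ has an eigenvalue λ ∈ ℂ with |λ| > 1, then there exists a constant c > 0 such that for every integer n ≥ 1, whenever γⁿ is written as a product of k elements of S ∪ S⁻¹, one has k ≥ c·n; that is, the word length of γⁿ with respect to S grows at least linearly in n. -/
open scoped Pointwise

section Aux

attribute [local instance] Matrix.linftyOpNormedRing Matrix.linftyOpNormedAlgebra
  Matrix.linftyOpNormedAddCommGroup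

lemma aux_mem_spectrum {m : ℕ} (A : Matrix (Fin m) (Fin m) ℂ) {lam : ℂ}
    (h : A.charpoly.IsRoot lam) : lam ∈ spectrum ℂ A := by
  rw [spectrum.mem_iff]
  intro hu
  have hdet : (Matrix.scalar (Fin m) lam - A).det = A.charpoly.eval lam := by
    rw [Matrix.charpoly, Polynomial.eval, ← Polynomial.coe_eval₂RingHom, RingHom.map_det]
    congr 1
    ext i j
    by_cases hij : i = j
    · subst hij
      simp [Matrix.charmatrix_apply_eq, Matrix.scalar_apply, Matrix.diagonal_apply_eq,
        Matrix.sub_apply]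
    · simp [Matrix.charmatrix_apply_ne _ _ _ hij, Matrix.scalar_apply,
        Matrix.diagonal_apply_ne _ hij, Matrix.sub_apply]
  have halg : algebraMap ℂ (Matrix (Fin m) (Fin m) ℂ) lam = Matrix.scalar (Fin m) lam := by
    ext i j
    simp [Matrix.algebraMap_matrix_apply, Matrix.scalar_apply, Matrix.diagonal]
  rw [halg] at hu
  have := (Matrix.isUnit_iff_isUnit_det _).mp hu
  rw [hdet, h] at this
  exact (by simpa using this : False)

lemma aux_abs_pow_le {m : ℕ} [NeZero m] (A : Matrix (Fin m) (Fin m) ℂ) {lam : ℂ}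
    (h : lam ∈ spectrum ℂ A) (n : ℕ) : ‖lam‖ ^ n ≤ ‖A ^ n‖ := by
  haveI : Nonempty (Fin m) := ⟨⟨0, Nat.pos_of_ne_zero (NeZero.ne m)⟩⟩
  haveI : CompleteSpace (Matrix (Fin m) (Fin m) ℂ) := FiniteDimensional.complete ℂ _
  have hmem : lam ^ n ∈ spectrum ℂ (A ^ n) :=
    spectrum.pow_image_subset A n ⟨lam, h, rfl⟩
  have := spectrum.norm_le_norm_of_mem hmem
  simpa using this

lemma aux_norm_list_prod_le {m : ℕ} [NeZero m] (L : List (Matrix (Fin m) (Fin m) ℂ))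
    {M : ℝ} (hM : 1 ≤ M) (h : ∀ x ∈ L, ‖x‖ ≤ M) : ‖L.prod‖ ≤ M ^ L.length := by
  haveI : Nonempty (Fin m) := ⟨⟨0, Nat.pos_of_ne_zero (NeZero.ne m)⟩⟩
  induction L with
  | nil => simpa using le_of_eq norm_one
  | cons a t ih =>
    have ha : ‖a‖ ≤ M := h a List.mem_cons_self
    have ht : ‖t.prod‖ ≤ M ^ t.length := ih fun x hx => h x (List.mem_cons_of_mem a hx)
    calc ‖(a :: t).prod‖ = ‖a * t.prod‖ := by rw [List.prod_cons]
      _ ≤ ‖a‖ * ‖t.prod‖ := norm_mul_le _ _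
      _ ≤ M * M ^ t.length := by
          apply mul_le_mul ha ht (norm_nonneg _) (le_trans zero_le_one hM)
      _ = M ^ (a :: t).length := by rw [List.length_cons, pow_succ']

end Aux

/-- If `γ` lies in the group generated by a finite set `S ⊆ GL_m(ℂ)` and `γ` has an
eigenvalue `λ` with `|λ| > 1`, then there exists `c > 0` such that whenever `γⁿ` (with
`n ≥ 1`) is written as a product of `k` elements of `S ∪ S⁻¹`, one has `k ≥ c·n`;
i.e. the word length of `γⁿ` grows at least linearly in `n`. -/
theorem stmt7 {m : ℕ} (S : Finset (Matrix.GeneralLinearGroup (Fin m) ℂ))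
    (γ : Matrix.GeneralLinearGroup (Fin m) ℂ)
    (hγ : γ ∈ Subgroup.closure (S : Set (Matrix.GeneralLinearGroup (Fin m) ℂ)))
    (lam : ℂ) (hroot : (Matrix.charpoly (↑γ : Matrix (Fin m) (Fin m) ℂ)).IsRoot lam)
    (habs : 1 < ‖lam‖) :
    ∃ c : ℝ, 0 < c ∧ ∀ n : ℕ, 1 ≤ n →
      ∀ L : List (Matrix.GeneralLinearGroup (Fin m) ℂ),
        (∀ x ∈ L, x ∈ (S : Set (Matrix.GeneralLinearGroup (Fin m) ℂ)) ∪
          ((S : Set (Matrix.GeneralLinearGroup (Fin m) ℂ))⁻¹)) →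
        L.prod = γ ^ n → c * n ≤ (L.length : ℝ) := by
  classical
  letI : NormedRing (Matrix (Fin m) (Fin m) ℂ) := Matrix.linftyOpNormedRing
  -- rule out m = 0
  rcases Nat.eq_zero_or_pos m with hm0 | hm0
  · exfalso
    have hdeg : (Matrix.charpoly (↑γ : Matrix (Fin m) (Fin m) ℂ)).natDegree = 0 := by
      rw [Matrix.charpoly_natDegree_eq_dim]
      simp [hm0]
    have hone : Matrix.charpoly (↑γ : Matrix (Fin m) (Fin m) ℂ) = 1 :=
      (Polynomial.Monic.natDegree_eq_zero (Matrix.charpoly_monic _)).mp hdeg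
    rw [hone] at hroot
    simpa [Polynomial.IsRoot] using hroot
  haveI : NeZero m := ⟨Nat.pos_iff_ne_zero.mp hm0⟩
  -- the constant
  set f : Matrix.GeneralLinearGroup (Fin m) ℂ → NNReal :=
    fun x => ‖(↑x : Matrix (Fin m) (Fin m) ℂ)‖₊ ⊔ ‖(↑(x⁻¹) : Matrix (Fin m) (Fin m) ℂ)‖₊
    with hf_def
  set M : ℝ := max 2 (S.sup f : NNReal) with hM_def
  have hM2 : (2 : ℝ) ≤ M := le_max_left _ _
  have hM1 : (1 : ℝ) ≤ M := le_trans one_le_two hM2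
  have hlogM : 0 < Real.log M := Real.log_pos (lt_of_lt_of_le one_lt_two hM2)
  have hloglam : 0 < Real.log (‖lam‖) := Real.log_pos habs
  refine ⟨Real.log (‖lam‖) / Real.log M, div_pos hloglam hlogM, ?_⟩
  intro n hn L hL hprod
  -- each element of the list has norm ≤ M
  have hbound : ∀ x ∈ L, ‖(↑x : Matrix (Fin m) (Fin m) ℂ)‖ ≤ M := by
    intro x hx
    rcases hL x hx with hxS | hxSinv
    · have h1 : ‖(↑x : Matrix (Fin m) (Fin m) ℂ)‖₊ ≤ f x := le_sup_left
      have : ‖(↑x : Matrix (Fin m) (Fin m) ℂ)‖₊ ≤ S.sup f :=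
        le_trans h1 (Finset.le_sup hxS)
      calc ‖(↑x : Matrix (Fin m) (Fin m) ℂ)‖ ≤ ((S.sup f) : NNReal) := this
        _ ≤ M := le_max_right _ _
    · have hxinv : x⁻¹ ∈ S := by
        rwa [Set.mem_inv] at hxSinv
      have h1 : ‖(↑((x⁻¹)⁻¹) : Matrix (Fin m) (Fin m) ℂ)‖₊ ≤ f x⁻¹ := le_sup_right
      have : ‖(↑((x⁻¹)⁻¹) : Matrix (Fin m) (Fin m) ℂ)‖₊ ≤ S.sup f :=
        le_trans h1 (Finset.le_sup hxinv)
      rw [inv_inv] at this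
      calc ‖(↑x : Matrix (Fin m) (Fin m) ℂ)‖ ≤ ((S.sup f) : NNReal) := this
        _ ≤ M := le_max_right _ _
  -- the key norm inequality
  have hspec : lam ∈ spectrum ℂ (↑γ : Matrix (Fin m) (Fin m) ℂ) := aux_mem_spectrum _ hroot
  have h1 : ‖lam‖ ^ n ≤ ‖(↑γ : Matrix (Fin m) (Fin m) ℂ) ^ n‖ :=
    aux_abs_pow_le _ hspec n
  have hcoe : (↑(γ ^ n) : Matrix (Fin m) (Fin m) ℂ) = (↑γ : Matrix (Fin m) (Fin m) ℂ) ^ n := by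
    simp [Units.val_pow_eq_pow_val]
  have hprodcoe : ((L.map Units.val).prod)
      = (↑γ : Matrix (Fin m) (Fin m) ℂ) ^ n := by
    rw [← hcoe, ← hprod]
    exact (map_list_prod (Units.coeHom (Matrix (Fin m) (Fin m) ℂ)) L).symm
  have h2 : ‖(L.map Units.val).prod‖
      ≤ M ^ (L.map Units.val).length := by
    apply aux_norm_list_prod_le _ hM1
    intro x hx
    rcases List.mem_map.mp hx with ⟨y, hy, rfl⟩
    exact hbound y hy
  rw [List.length_map] at h2
  have key : ‖lam‖ ^ n ≤ M ^ L.length := by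
    calc ‖lam‖ ^ n ≤ ‖(↑γ : Matrix (Fin m) (Fin m) ℂ) ^ n‖ := h1
      _ = ‖(L.map Units.val).prod‖ := by rw [hprodcoe]
      _ ≤ M ^ L.length := h2
  -- take logarithms
  have hlog : (n : ℝ) * Real.log (‖lam‖) ≤ (L.length : ℝ) * Real.log M := by
    have := Real.log_le_log (pow_pos (lt_trans zero_lt_one habs) n) key
    rwa [Real.log_pow, Real.log_pow] at this
  rw [div_mul_eq_mul_div, div_le_iff₀ hlogM, mul_comm (Real.log (‖lam‖)) (n : ℝ)]
  exact hlog
end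

section
/- Let A : [0,1] → GL_m(ℂ) be a continuous map such that for every t ∈ [0,1] every eigenvalue of A(t) is a root of unity, and such that A(0) is unipotent, i.e., (A(0) − 1)^m = 0. Then A(t) is unipotent for every t ∈ [0,1]; in particular A(1) is unipotent. -/
open Polynomial

private lemma aux_cps {E : Type*} [MetricSpace E] {s : Set E}
    (hconn : IsPreconnected s) (hcount : s.Countable) : s.Subsingleton := by
  intro x hx y hy
  by_contra hne
  have hd : 0 < dist y x := dist_pos.mpr (Ne.symm hne)
  have himg : IsPreconnected ((fun z => dist z x) '' s) :=
    hconn.image _ (continuous_id.dist continuous_const).continuousOn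
  have hsub : Set.Icc (0 : ℝ) (dist y x) ⊆ (fun z => dist z x) '' s :=
    himg.ordConnected.out ⟨x, hx, dist_self x⟩ ⟨y, hy, rfl⟩
  have hc : (Set.Icc (0 : ℝ) (dist y x)).Countable := ((hcount.image _).mono hsub)
  have := hc.le_aleph0
  rw [Cardinal.mk_Icc_real hd] at this
  exact Cardinal.aleph0_lt_continuum.not_ge this

private lemma aux_eval_charpoly {m : ℕ} (M : Matrix (Fin m) (Fin m) ℂ) (x : ℂ) :
    (Matrix.charpoly M).eval x = (x • (1 : Matrix (Fin m) (Fin m) ℂ) - M).det := by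
  rw [Matrix.charpoly]
  have h := (RingHom.map_det (Polynomial.evalRingHom x) (Matrix.charmatrix M))
  simp only [Polynomial.coe_evalRingHom] at h
  rw [h]
  congr 1
  ext i j
  by_cases hij : i = j
  · subst hij
    simp [Matrix.charmatrix_apply_eq, Matrix.one_apply]
  · simp [Matrix.charmatrix_apply_ne _ _ _ hij, Matrix.one_apply, hij]

private lemma aux_cont_det {m : ℕ} : Continuous fun M : Matrix (Fin m) (Fin m) ℂ => M.det := by
  simp only [Matrix.det_apply]
  refine continuous_finset_sum _ fun σ _ => Continuous.zsmul ?_ _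
  exact continuous_finset_prod _ fun i _ =>
    (continuous_apply i).comp (continuous_apply (σ i))

/-- Let `A : [0,1] → GL_m(ℂ)` be a continuous path such that every eigenvalue of every
`A t` is a root of unity, and such that `A 0` is unipotent, i.e. `(A 0 - 1)^m = 0`.
Then `A t` is unipotent for every `t`; in particular `A 1` is unipotent. -/
theorem stmt8 {m : ℕ} (A : Set.Icc (0 : ℝ) 1 → Matrix.GeneralLinearGroup (Fin m) ℂ)
    (hcont : Continuous A)
    (hroots : ∀ t : Set.Icc (0 : ℝ) 1, ∀ lam : ℂ,
      (Matrix.charpoly (↑(A t) : Matrix (Fin m) (Fin m) ℂ)).IsRoot lam →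
      ∃ k : ℕ, 1 ≤ k ∧ lam ^ k = 1)
    (h0 : ((↑(A ⟨0, by norm_num⟩) : Matrix (Fin m) (Fin m) ℂ) - 1) ^ m = 0) :
    ∀ t : Set.Icc (0 : ℝ) 1, ((↑(A t) : Matrix (Fin m) (Fin m) ℂ) - 1) ^ m = 0 := by
  classical
  -- the set of roots of unity is countable
  set U : Set ℂ := {z : ℂ | ∃ k : ℕ, 1 ≤ k ∧ z ^ k = 1} with hUdef
  have hU : U.Countable := by
    have hEq : U = ⋃ k : ℕ, {z : ℂ | 1 ≤ k ∧ z ^ k = 1} := by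
      ext z; simp [hUdef, Set.mem_iUnion]
    rw [hEq]
    refine Set.countable_iUnion fun k => Set.Finite.countable ?_
    rcases Nat.eq_zero_or_pos k with hk | hk
    · subst hk
      convert Set.finite_empty
      ext z; simp
    · refine Set.Finite.subset (Polynomial.nthRoots k (1 : ℂ)).toFinset.finite_toSet ?_
      intro z hz
      simp only [Set.mem_setOf_eq] at hz
      simp [Multiset.mem_toFinset, Polynomial.mem_nthRoots hk, hz.2]
  haveI : Countable U := hU.to_subtype
  -- the evaluation map g
  set g : Set.Icc (0 : ℝ) 1 → (Fin (m + 1) → ℂ) := fun t j =>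
    ((((j : ℕ) : ℂ)) • (1 : Matrix (Fin m) (Fin m) ℂ) - (↑(A t) : Matrix (Fin m) (Fin m) ℂ)).det
    with hgdef
  have hgval : ∀ (t : Set.Icc (0 : ℝ) 1) (j : Fin (m + 1)),
      g t j = (Matrix.charpoly (↑(A t) : Matrix (Fin m) (Fin m) ℂ)).eval (((j : ℕ) : ℂ)) := by
    intro t j
    rw [hgdef, aux_eval_charpoly]
  have hgcont : Continuous g := by
    refine continuous_pi fun j => aux_cont_det.comp ?_
    exact continuous_const.sub (Units.continuous_val.comp hcont)
  -- the countable target set T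
  set T : Set (Fin (m + 1) → ℂ) := Set.range
      (fun lam : Fin m → U => fun j : Fin (m + 1) => ∏ i, (((j : ℕ) : ℂ) - (lam i : ℂ)))
    with hTdef
  have hT : T.Countable := Set.countable_range _
  have hmem : ∀ t, g t ∈ T := by
    intro t
    set p := Matrix.charpoly (↑(A t) : Matrix (Fin m) (Fin m) ℂ) with hp
    have hmon : p.Monic := Matrix.charpoly_monic _
    have hsp : p.Splits := IsAlgClosed.splits p
    have hdeg : p.natDegree = m := by
      rw [hp, Matrix.charpoly_natDegree_eq_dim, Fintype.card_fin]
    have hcard : Multiset.card p.roots = m := by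
      rw [← hdeg]
      exact Polynomial.splits_iff_card_roots.mp hsp
    set l := p.roots.toList with hl
    have hlen : l.length = m := by rw [hl, Multiset.length_toList, hcard]
    have hmemU : ∀ i : Fin l.length, l.get i ∈ U := by
      intro i
      have h1 : l.get i ∈ l := List.get_mem _ _
      have hmem' : l.get i ∈ p.roots := Multiset.mem_toList.mp h1
      exact hroots t _ (Polynomial.isRoot_of_mem_roots hmem')
    refine ⟨fun i => ⟨l.get (Fin.cast hlen.symm i), hmemU _⟩, ?_⟩
    funext j
    have hprod : p = (p.roots.map fun a => X - C a).prod :=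
      hsp.eq_prod_roots_of_monic hmon
    have hev : p.eval (((j : ℕ) : ℂ)) = (p.roots.map fun a => ((j : ℕ) : ℂ) - a).prod := by
      conv_lhs => rw [hprod]
      rw [Polynomial.eval_multiset_prod, Multiset.map_map]
      simp
    have hcoe : p.roots = (l : Multiset ℂ) := (Multiset.coe_toList _).symm
    have hlist : (p.roots.map fun a => ((j : ℕ) : ℂ) - a).prod
        = (l.map fun a => ((j : ℕ) : ℂ) - a).prod := by
      rw [hcoe]; rfl
    have hofn : (l.map fun a => ((j : ℕ) : ℂ) - a).prod
        = ∏ i : Fin l.length, (((j : ℕ) : ℂ) - l.get i) := by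
      conv_lhs => rw [← List.ofFn_get l, List.map_ofFn]
      rw [List.prod_ofFn]
      rfl
    have hreind : (∏ i : Fin m, (((j : ℕ) : ℂ) - l.get (Fin.cast hlen.symm i)))
        = ∏ i : Fin l.length, (((j : ℕ) : ℂ) - l.get i) := by
      refine (Fintype.prod_equiv (finCongr hlen) _ _ fun i => ?_).symm
      congr 1
    simp only [hgval t j, ← hp, hev, hlist, hofn]
    exact hreind
  -- g is constant
  have hconn : IsPreconnected (Set.range g) := by
    haveI : PreconnectedSpace (Set.Icc (0 : ℝ) 1) := Subtype.preconnectedSpace isPreconnected_Icc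
    exact isPreconnected_range hgcont
  have hsing : (Set.range g).Subsingleton :=
    aux_cps hconn (hT.mono (Set.range_subset_iff.mpr hmem))
  have hconst : ∀ t, g t = g ⟨0, by norm_num⟩ := fun t => hsing ⟨t, rfl⟩ ⟨_, rfl⟩
  -- value at 0
  set N : Matrix (Fin m) (Fin m) ℂ := (↑(A ⟨0, by norm_num⟩) : Matrix (Fin m) (Fin m) ℂ) - 1
    with hN
  have hNcp : Matrix.charpoly N = X ^ m := by
    have h1 := (Matrix.isNilpotent_charpoly_sub_pow_of_isNilpotent (M := N) ⟨m, h0⟩).eq_zero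
    have h2 := sub_eq_zero.mp h1
    simpa using h2
  have hg0 : ∀ x : ℂ,
      (Matrix.charpoly (↑(A ⟨0, by norm_num⟩) : Matrix (Fin m) (Fin m) ℂ)).eval x
        = (x - 1) ^ m := by
    intro x
    rw [aux_eval_charpoly]
    have hx : x • (1 : Matrix (Fin m) (Fin m) ℂ)
        - (↑(A ⟨0, by norm_num⟩) : Matrix (Fin m) (Fin m) ℂ) = (x - 1) • 1 - N := by
      rw [hN, sub_smul, one_smul, sub_sub_sub_cancel_right]
    rw [hx, ← aux_eval_charpoly, hNcp]
    simp
  -- conclusion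
  intro t
  set p := Matrix.charpoly (↑(A t) : Matrix (Fin m) (Fin m) ℂ) with hp
  have hdeg : p.natDegree = m := by
    rw [hp, Matrix.charpoly_natDegree_eq_dim, Fintype.card_fin]
  have hpeq : p = (X - C 1) ^ m := by
    rw [← sub_eq_zero]
    refine Polynomial.eq_zero_of_natDegree_lt_card_of_eval_eq_zero _
      (f := fun j : Fin (m + 1) => ((j : ℕ) : ℂ)) ?_ ?_ ?_
    · intro a b hab
      have : (a : ℕ) = (b : ℕ) := Nat.cast_injective hab
      exact Fin.ext this
    · intro j
      rw [eval_sub]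
      have h1 : p.eval ((j : ℕ) : ℂ) = g t j := (hgval t j).symm
      have h2 : g t j = ((((j : ℕ) : ℂ)) - 1) ^ m := by
        rw [hconst t, hgval _ j, hg0]
      rw [h1, h2]
      simp
    · have hq : ((X - C (1 : ℂ)) ^ m).natDegree = m := by
        rw [natDegree_pow, natDegree_X_sub_C, mul_one]
      calc (p - (X - C 1) ^ m).natDegree
          ≤ max p.natDegree ((X - C (1 : ℂ)) ^ m).natDegree := natDegree_sub_le _ _
        _ ≤ m := by rw [hdeg, hq]; simp
        _ < Fintype.card (Fin (m + 1)) := by simp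
  have hch := Matrix.aeval_self_charpoly (↑(A t) : Matrix (Fin m) (Fin m) ℂ)
  rw [← hp, hpeq] at hch
  simpa using hch
end

section
/- Let H be a subgroup of GL_m(ℂ) which is nilpotent as an abstract group and which is generated by a set of unipotent matrices. Then every element h of H is unipotent, i.e., (h − 1)^m = 0. -/
open Module LinearMap
open scoped commutatorElement

-- helper subgroups
def kerSub {G M : Type*} [Group G] [Monoid M] (ρ : G →* M) : Subgroup G where
  carrier := {g | ρ g = 1}
  one_mem' := map_one ρ
  mul_mem' := by intro a b ha hb; simp only [Set.mem_setOf_eq] at *; rw [map_mul, ha, hb, one_mul]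
  inv_mem' := by
    intro a ha; simp only [Set.mem_setOf_eq] at *
    have : ρ a⁻¹ * ρ a = 1 := by rw [← map_mul, inv_mul_cancel, map_one]
    rwa [ha, mul_one] at this

def commSub {G M : Type*} [Group G] [Monoid M] (ρ : G →* M) (f : M) : Subgroup G where
  carrier := {g | Commute f (ρ g)}
  one_mem' := by simp [Commute, SemiconjBy]
  mul_mem' := by intro a b ha hb; simpa [map_mul] using Commute.mul_right ha hb
  inv_mem' := by
    intro a ha; simp only [Set.mem_setOf_eq] at *
    have h1 : ρ a * ρ a⁻¹ = 1 := by rw [← map_mul, mul_inv_cancel, map_one]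
    have h2 : ρ a⁻¹ * ρ a = 1 := by rw [← map_mul, inv_mul_cancel, map_one]
    calc f * ρ a⁻¹ = ρ a⁻¹ * (ρ a * f) * ρ a⁻¹ := by rw [← mul_assoc, h2, one_mul]
    _ = ρ a⁻¹ * (f * ρ a) * ρ a⁻¹ := by rw [ha.eq]
    _ = ρ a⁻¹ * f * (ρ a * ρ a⁻¹) := by rw [mul_assoc, mul_assoc, mul_assoc]
    _ = ρ a⁻¹ * f := by rw [h1, mul_one]

def fixSub {G V : Type*} [Group G] [AddCommGroup V] [Module ℂ V]
    (ρ : G →* Module.End ℂ V) (W : Set V) : Subgroup G where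
  carrier := {g | ∀ v ∈ W, ρ g v = v}
  one_mem' := by intro v _; simp
  mul_mem' := by
    intro a b ha hb v hv
    rw [map_mul, Module.End.mul_apply, hb v hv, ha v hv]
  inv_mem' := by
    intro a ha v hv
    have : ρ a⁻¹ (ρ a v) = v := by
      rw [← Module.End.mul_apply, ← map_mul, inv_mul_cancel, map_one]; rfl
    rwa [ha v hv] at this

lemma pow_finrank_zero {V : Type*} [AddCommGroup V] [Module ℂ V] [FiniteDimensional ℂ V]
    {f : Module.End ℂ V} (h : IsNilpotent f) : f ^ (finrank ℂ V) = 0 := by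
  have h2 := h.charpoly_eq_X_pow_finrank
  have h3 := f.aeval_self_charpoly
  rw [h2] at h3
  simpa using h3

section
variable {G : Type*} [Group G] {V : Type*} [AddCommGroup V] [Module ℂ V] [FiniteDimensional ℂ V]

-- Schur-type: a ρ-central element acts as a scalar when there is no proper invariant submodule
lemma schur_scalar [Nontrivial V] (ρ : G →* Module.End ℂ V)
    (hirr : ∀ p : Submodule ℂ V, p ≠ ⊥ → (∀ g : G, ∀ v ∈ p, ρ g v ∈ p) → p = ⊤)
    (z : G) (hz : ∀ g : G, Commute (ρ z) (ρ g)) :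
    ∃ μ : ℂ, ρ z = μ • (1 : Module.End ℂ V) := by
  obtain ⟨μ, hμ⟩ := Module.End.exists_eigenvalue (ρ z)
  refine ⟨μ, ?_⟩
  have hinv : ∀ g : G, ∀ v ∈ (ρ z).eigenspace μ, ρ g v ∈ (ρ z).eigenspace μ := by
    intro g v hv
    rw [Module.End.mem_eigenspace_iff] at hv ⊢
    calc ρ z (ρ g v) = (ρ z * ρ g) v := rfl
    _ = (ρ g * ρ z) v := by rw [(hz g).eq]
    _ = ρ g (ρ z v) := rfl
    _ = μ • ρ g v := by rw [hv, map_smul]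
  have htop : (ρ z).eigenspace μ = ⊤ := hirr _ hμ hinv
  ext v
  have : v ∈ (ρ z).eigenspace μ := htop ▸ Submodule.mem_top
  rw [Module.End.mem_eigenspace_iff] at this
  simpa using this

-- trace of a "unipotent" endomorphism is the dimension
lemma trace_unip {f : Module.End ℂ V} (h : IsNilpotent (f - 1)) :
    LinearMap.trace ℂ V f = (finrank ℂ V : ℂ) := by
  have h0 : LinearMap.trace ℂ V (f - 1) = 0 :=
    (LinearMap.isNilpotent_trace_of_isNilpotent h).eq_zero
  have := map_sub (LinearMap.trace ℂ V) f 1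
  rw [h0, LinearMap.trace_one] at this
  exact sub_eq_zero.mp this.symm
end

section
-- the key trace identity: a generator conjugate to a scalar multiple of itself forces scalar = 1
lemma conj_scalar_eq_one {G : Type*} [Group G] {V : Type*} [AddCommGroup V] [Module ℂ V]
    [FiniteDimensional ℂ V] [Nontrivial V]
    (ρ : G →* Module.End ℂ V) {s x : G} (hs : IsNilpotent (ρ s - 1)) {μ : ℂ}
    (hrel : ρ (x * s * x⁻¹) = μ • ρ s) : μ = 1 := by
  have htr : LinearMap.trace ℂ V (ρ (x * s * x⁻¹)) = LinearMap.trace ℂ V (ρ s) := by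
    have h1 : ρ (x * s * x⁻¹) = ρ x * (ρ s * ρ x⁻¹) := by rw [map_mul, map_mul, mul_assoc]
    rw [h1, LinearMap.trace_mul_comm]
    have h2 : ρ s * ρ x⁻¹ * ρ x = ρ s := by
      rw [mul_assoc, ← map_mul, inv_mul_cancel, map_one, mul_one]
    rw [h2]
  rw [hrel, map_smul, trace_unip hs, smul_eq_mul] at htr
  have hn : (finrank ℂ V : ℂ) ≠ 0 := by
    have : 0 < finrank ℂ V := finrank_pos
    exact_mod_cast Nat.cast_ne_zero.mpr this.ne'
  field_simp at htr
  exact htr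
end

lemma core : ∀ (n : ℕ) (V : Type) [AddCommGroup V] [Module ℂ V] [FiniteDimensional ℂ V],
    finrank ℂ V = n → ∀ (G : Type) [Group G] [Group.IsNilpotent G]
    (S : Set G) (ρ : G →* Module.End ℂ V),
    Subgroup.closure S = ⊤ → (∀ s ∈ S, IsNilpotent (ρ s - 1)) → ∀ [Nontrivial V],
    ∃ v : V, v ≠ 0 ∧ ∀ s ∈ S, ρ s v = v := by
  intro n
  induction n using Nat.strong_induction_on with
  | _ n IH =>
  intro V _ _ _ hrank G _ _ S ρ hS hnil _
  classical
  by_cases hps : ∃ p : Submodule ℂ V, p ≠ ⊥ ∧ p ≠ ⊤ ∧ ∀ g : G, ∀ v ∈ p, ρ g v ∈ p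
  · obtain ⟨p, hp0, hpT, hpi⟩ := hps
    let ρ' : G →* Module.End ℂ p :=
      { toFun := fun g => (ρ g).restrict (hpi g)
        map_one' := by
          ext v
          simp [LinearMap.restrict_apply]
        map_mul' := by
          intro a b
          ext v
          simp [LinearMap.restrict_apply, map_mul, Module.End.mul_apply] }
    have hnil' : ∀ s ∈ S, IsNilpotent (ρ' s - 1) := by
      intro s hs
      obtain ⟨k, hk⟩ := hnil s hs
      have hsub : ∀ x ∈ p, (ρ s - 1) x ∈ p := by
        intro x hx
        simpa [LinearMap.sub_apply] using p.sub_mem (hpi s x hx) hx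
      have he : ρ' s - 1 = (ρ s - 1).restrict hsub := by
        ext v
        simp [ρ', LinearMap.restrict_apply, LinearMap.sub_apply]
      refine ⟨k, ?_⟩
      rw [he, Module.End.pow_restrict]
      ext v
      simp [LinearMap.restrict_apply, hk]
    haveI : Nontrivial p := Submodule.nontrivial_iff_ne_bot.mpr hp0
    have hlt : finrank ℂ p < n := hrank ▸ Submodule.finrank_lt hpT
    obtain ⟨v, hv0, hvfix⟩ := IH (finrank ℂ p) hlt p rfl G S ρ' hS hnil'
    refine ⟨(v : V), by simpa using hv0, fun s hs => ?_⟩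
    have := hvfix s hs
    have h2 : ((ρ' s) v : V) = (v : V) := by rw [this]
    simpa [ρ', LinearMap.restrict_apply] using h2
  · push_neg at hps
    have hirr : ∀ q : Submodule ℂ V, q ≠ ⊥ → (∀ g : G, ∀ v ∈ q, ρ g v ∈ q) → q = ⊤ := by
      intro q hq hqi
      by_contra hqT
      obtain ⟨g, v, hvq, hnot⟩ := hps q hq hqT
      exact hnot (hqi g v hvq)
    by_cases htriv : ∀ s ∈ S, ρ s = 1
    · obtain ⟨v, hv⟩ := exists_ne (0 : V)
      exact ⟨v, hv, fun s hs => by rw [htriv s hs]; rfl⟩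
    exfalso
    push_neg at htriv
    obtain ⟨s₀, hs₀S, hs₀⟩ := htriv
    -- the property Q j : ρ is trivial on the j-th term of the lower central series
    have hex : ∃ j, ∀ y ∈ (⊤ : Subgroup G).lowerCentralSeries j, ρ y = 1 := by
      obtain ⟨k, hk⟩ := Subgroup.nilpotent_iff_lowerCentralSeries.mp ‹Group.IsNilpotent G›
      exact ⟨k, fun y hy => by rw [hk, Subgroup.mem_bot] at hy; rw [hy, map_one]⟩
    set n' := Nat.find hex with hn'
    have hQ : ∀ y ∈ (⊤ : Subgroup G).lowerCentralSeries n', ρ y = 1 := Nat.find_spec hex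
    have hn'0 : n' ≠ 0 := by
      intro h0
      exact hs₀ (hQ s₀ (by rw [h0]; exact Subgroup.mem_top s₀) )
    obtain ⟨j, hj⟩ : ∃ j, n' = j + 1 := ⟨n' - 1, (Nat.succ_pred_eq_of_pos (Nat.pos_of_ne_zero hn'0)).symm⟩
    have hnQ : ¬ ∀ y ∈ (⊤ : Subgroup G).lowerCentralSeries j, ρ y = 1 :=
      Nat.find_min hex (by omega)
    -- elements of LCS j are ρ-central
    have hcen : ∀ z ∈ (⊤ : Subgroup G).lowerCentralSeries j, ∀ g : G, Commute (ρ z) (ρ g) := by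
      intro z hz g
      have hcom : ⁅z, g⁆ ∈ (⊤ : Subgroup G).lowerCentralSeries (j + 1) :=
        Subgroup.commutator_mem_commutator hz (Subgroup.mem_top g)
      have h1 : ρ ⁅z, g⁆ = 1 := hQ _ (hj ▸ hcom)
      have h2 : z * g = ⁅z, g⁆ * (g * z) := by group
      show ρ z * ρ g = ρ g * ρ z
      calc ρ z * ρ g = ρ (z * g) := (map_mul ρ z g).symm
      _ = ρ ⁅z, g⁆ * ρ (g * z) := by rw [h2, map_mul]
      _ = ρ g * ρ z := by rw [h1, one_mul, map_mul]
    -- a scalar for each ρ-central element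
    have schur := schur_scalar ρ hirr
    -- case j = 0 : everything ρ-central, s₀ acts as a scalar
    rcases Nat.eq_zero_or_pos j with hj0 | hjpos
    · have hc : ∀ g : G, Commute (ρ s₀) (ρ g) :=
        hcen s₀ (by rw [hj0]; exact Subgroup.mem_top s₀)
      obtain ⟨μ, hμ⟩ := schur s₀ hc
      have hμ1 : μ = 1 := by
        have htr : (finrank ℂ V : ℂ) = μ * (finrank ℂ V : ℂ) := by
          conv_lhs => rw [← trace_unip (hnil s₀ hs₀S)]
          rw [hμ, map_smul, LinearMap.trace_one, smul_eq_mul]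
        have hn : (finrank ℂ V : ℂ) ≠ 0 := by
          exact_mod_cast Nat.cast_ne_zero.mpr (finrank_pos (R := ℂ) (M := V)).ne'
        field_simp at htr
        exact htr.symm
      rw [hμ1, one_smul] at hμ
      exact hs₀ hμ
    -- case j ≥ 1
    obtain ⟨i, hi⟩ : ∃ i, j = i + 1 := ⟨j - 1, (Nat.succ_pred_eq_of_pos hjpos).symm⟩
    have hcs : ∃ x ∈ (⊤ : Subgroup G).lowerCentralSeries i, ∃ s ∈ S, ρ ⁅x, s⁆ ≠ 1 := by
      by_contra hno
      push_neg at hno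
      apply hnQ
      have hle : (⊤ : Subgroup G).lowerCentralSeries j ≤ kerSub ρ := by
        rw [hi]
        show ⁅(⊤ : Subgroup G).lowerCentralSeries i, (⊤ : Subgroup G)⁆ ≤ kerSub ρ
        rw [Subgroup.commutator_le]
        intro x hx g _
        have hcx : ∀ g' : G, Commute (ρ x) (ρ g') := by
          intro g'
          have hcl : Subgroup.closure S ≤ commSub ρ (ρ x) := by
            rw [Subgroup.closure_le]
            intro s hs
            show Commute (ρ x) (ρ s)
            have h1 : ρ ⁅x, s⁆ = 1 := hno x hx s hs
            have h2 : x * s = ⁅x, s⁆ * (s * x) := by group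
            show ρ x * ρ s = ρ s * ρ x
            calc ρ x * ρ s = ρ (x * s) := (map_mul ρ x s).symm
            _ = ρ ⁅x, s⁆ * ρ (s * x) := by rw [h2, map_mul]
            _ = ρ s * ρ x := by rw [h1, one_mul, map_mul]
          rw [hS] at hcl
          exact hcl (Subgroup.mem_top g')
        show ρ ⁅x, g⁆ = 1
        have e : ρ ⁅x, g⁆ = ρ x * ρ g * ρ x⁻¹ * ρ g⁻¹ := by
          rw [commutatorElement_def, map_mul, map_mul, map_mul]
        have hxinv : ρ x * ρ x⁻¹ = 1 := by rw [← map_mul, mul_inv_cancel, map_one]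
        have hginv : ρ g * ρ g⁻¹ = 1 := by rw [← map_mul, mul_inv_cancel, map_one]
        calc ρ ⁅x, g⁆ = ρ x * ρ g * ρ x⁻¹ * ρ g⁻¹ := e
        _ = ρ g * ρ x * ρ x⁻¹ * ρ g⁻¹ := by rw [(hcx g).eq]
        _ = ρ g * (ρ x * ρ x⁻¹) * ρ g⁻¹ := by rw [mul_assoc (ρ g)]
        _ = ρ g * ρ g⁻¹ := by rw [hxinv, mul_one]
        _ = 1 := hginv
      exact fun y hy => hle hy
    obtain ⟨x, hx, s, hsS, hzne⟩ := hcs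
    have hzj : ⁅x, s⁆ ∈ (⊤ : Subgroup G).lowerCentralSeries j := by
      rw [hi]
      exact Subgroup.commutator_mem_commutator hx (Subgroup.mem_top s)
    obtain ⟨μ, hμ⟩ := schur ⁅x, s⁆ (hcen _ hzj)
    have hμne : μ ≠ 1 := fun h => hzne (by rw [hμ, h, one_smul])
    have hrel : ρ (x * s * x⁻¹) = μ • ρ s := by
      have hgrp : x * s * x⁻¹ = ⁅x, s⁆ * s := by group
      rw [hgrp, map_mul, hμ, smul_mul_assoc, one_mul]
    exact hμne (conj_scalar_eq_one ρ (hnil s hsS) hrel)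

lemma pow_comm_mkQ {V : Type} [AddCommGroup V] [Module ℂ V] {W : Submodule ℂ V}
    (f : Module.End ℂ V) (fq : Module.End ℂ (V ⧸ W))
    (hcomm : ∀ v, fq (W.mkQ v) = W.mkQ (f v)) (k : ℕ) :
    ∀ v, (fq ^ k) (W.mkQ v) = W.mkQ ((f ^ k) v) := by
  induction k with
  | zero => intro v; simp
  | succ k ih =>
    intro v
    rw [pow_succ', pow_succ', Module.End.mul_apply, Module.End.mul_apply, ih v, hcomm]

lemma mainEnd : ∀ (n : ℕ) (V : Type) [AddCommGroup V] [Module ℂ V] [FiniteDimensional ℂ V],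
    finrank ℂ V = n → ∀ (G : Type) [Group G] [Group.IsNilpotent G]
    (S : Set G) (ρ : G →* Module.End ℂ V),
    Subgroup.closure S = ⊤ → (∀ s ∈ S, IsNilpotent (ρ s - 1)) →
    ∀ g : G, IsNilpotent (ρ g - 1) := by
  intro n
  induction n using Nat.strong_induction_on with
  | _ n IH =>
  intro V _ _ _ hrank G _ _ S ρ hS hnil g
  rcases Nat.eq_zero_or_pos n with h0 | hpos
  · haveI : Subsingleton V := finrank_zero_iff.mp (by rw [hrank, h0])
    exact ⟨1, by ext v; exact Subsingleton.elim _ _⟩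
  · haveI : Nontrivial V := finrank_pos_iff.mp (by rw [hrank]; exact hpos)
    set W : Submodule ℂ V := ⨅ s : S, LinearMap.ker (ρ s - 1) with hWdef
    have hmemW : ∀ v : V, v ∈ W ↔ ∀ s ∈ S, ρ s v = v := by
      intro v
      rw [hWdef, Submodule.mem_iInf]
      constructor
      · intro h s hs
        have := h ⟨s, hs⟩
        rw [LinearMap.mem_ker, LinearMap.sub_apply, Module.End.one_apply, sub_eq_zero] at this
        exact this
      · intro h s
        rw [LinearMap.mem_ker, LinearMap.sub_apply, Module.End.one_apply, sub_eq_zero]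
        exact h s s.2
    obtain ⟨v₀, hv0, hfix⟩ := core n V hrank G S ρ hS hnil
    have hW0 : W ≠ ⊥ := by
      intro hbot
      apply hv0
      have : v₀ ∈ W := (hmemW v₀).mpr hfix
      rwa [hbot, Submodule.mem_bot] at this
    have hGfix : ∀ g' : G, ∀ v ∈ W, ρ g' v = v := by
      have hcl : Subgroup.closure S ≤ fixSub ρ W := by
        rw [Subgroup.closure_le]
        intro s hs
        show ∀ v ∈ (W : Set V), ρ s v = v
        intro v hv
        exact (hmemW v).mp hv s hs
      rw [hS] at hcl
      intro g' v hv
      exact hcl (Subgroup.mem_top g') v hv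
    have hWi : ∀ g' : G, W ≤ W.comap (ρ g') := by
      intro g' v hv
      rw [Submodule.mem_comap, hGfix g' v hv]
      exact hv
    let ρq : G →* Module.End ℂ (V ⧸ W) :=
      { toFun := fun g' => W.mapQ W (ρ g') (hWi g')
        map_one' := by
          ext x
          simp [Submodule.mapQ_apply]
        map_mul' := by
          intro a b
          ext x
          simp [Submodule.mapQ_apply, map_mul, Module.End.mul_apply] }
    have hmapq : ∀ g' : G, ∀ v : V, (ρq g') (W.mkQ v) = W.mkQ (ρ g' v) := by
      intro g' v
      show W.mapQ W (ρ g') (hWi g') (W.mkQ v) = W.mkQ (ρ g' v)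
      rw [W.mkQ_apply, Submodule.mapQ_apply, W.mkQ_apply]
    have hcomm : ∀ g' : G, ∀ v : V, (ρq g' - 1) (W.mkQ v) = W.mkQ ((ρ g' - 1) v) := by
      intro g' v
      show (ρq g') (W.mkQ v) - W.mkQ v = W.mkQ (ρ g' v - v)
      rw [map_sub, hmapq]
    have hnilq : ∀ s ∈ S, IsNilpotent (ρq s - 1) := by
      intro s hs
      obtain ⟨k, hk⟩ := hnil s hs
      refine ⟨k, ?_⟩
      ext x
      show ((ρq s - 1) ^ k) (W.mkQ x) = _
      rw [pow_comm_mkQ (ρ s - 1) (ρq s - 1) (hcomm s) k x, hk]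
      simp
    have hlt : finrank ℂ (V ⧸ W) < n := by
      have hsum := W.finrank_quotient_add_finrank
      have hWpos : 0 < finrank ℂ W := by
        rcases Nat.eq_zero_or_pos (finrank ℂ W) with h | h
        · exact absurd (Submodule.finrank_eq_zero.mp h) hW0
        · exact h
      omega
    obtain ⟨k, hk⟩ := IH (finrank ℂ (V ⧸ W)) (hrank ▸ hlt) (V ⧸ W) rfl G S ρq hS hnilq g
    refine ⟨k + 1, ?_⟩
    ext v
    have hmem : ((ρ g - 1) ^ k) v ∈ W := by
      rw [← Submodule.Quotient.mk_eq_zero W, ← W.mkQ_apply,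
        ← pow_comm_mkQ (ρ g - 1) (ρq g - 1) (hcomm g) k, hk]
      simp
    rw [pow_succ', Module.End.mul_apply, LinearMap.zero_apply]
    show (ρ g) (((ρ g - 1) ^ k) v) - ((ρ g - 1) ^ k) v = 0
    rw [hGfix g _ hmem, sub_self]

/-- Let `H` be a subgroup of `GL_m(ℂ)` which is nilpotent as an abstract group and which is
generated by a set `T` of unipotent matrices. Then every element of `H` is unipotent,
i.e. `(h - 1)^m = 0`. -/
theorem stmt9 {m : ℕ} (H : Subgroup (Matrix.GeneralLinearGroup (Fin m) ℂ))
    (hnil : Group.IsNilpotent ↥H)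
    (T : Set (Matrix.GeneralLinearGroup (Fin m) ℂ))
    (hTgen : Subgroup.closure T = H)
    (hTuni : ∀ x ∈ T, ((↑x : Matrix (Fin m) (Fin m) ℂ) - 1) ^ m = 0) :
    ∀ h ∈ H, ((↑h : Matrix (Fin m) (Fin m) ℂ) - 1) ^ m = 0 := by
  subst hTgen
  haveI := hnil
  intro h hh
  let E : Matrix (Fin m) (Fin m) ℂ ≃ₐ[ℂ] Module.End ℂ (Fin m → ℂ) := Matrix.toLinAlgEquiv'
  let ρ : ↥(Subgroup.closure T) →* Module.End ℂ (Fin m → ℂ) :=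
    { toFun := fun g =>
        E ((↑(↑g : Matrix.GeneralLinearGroup (Fin m) ℂ) : Matrix (Fin m) (Fin m) ℂ))
      map_one' := by simp
      map_mul' := by
        intro a b
        show E _ = E _ * E _
        rw [← map_mul]
        congr 1 }
  let S : Set ↥(Subgroup.closure T) :=
    ((↑) : ↥(Subgroup.closure T) → Matrix.GeneralLinearGroup (Fin m) ℂ) ⁻¹' T
  have hS : Subgroup.closure S = ⊤ := Subgroup.closure_closure_coe_preimage
  have hkey : ∀ g : ↥(Subgroup.closure T),
      ρ g - 1 = E ((↑(↑g : Matrix.GeneralLinearGroup (Fin m) ℂ) : Matrix (Fin m) (Fin m) ℂ) - 1) := by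
    intro g
    rw [map_sub, map_one]
    rfl
  have hTuni' : ∀ s ∈ S, IsNilpotent (ρ s - 1) := by
    intro s hs
    refine ⟨m, ?_⟩
    rw [hkey, ← map_pow, hTuni _ hs, map_zero]
  have hmain := mainEnd (finrank ℂ (Fin m → ℂ)) (Fin m → ℂ) rfl
    ↥(Subgroup.closure T) S ρ hS hTuni' ⟨h, hh⟩
  have hz := pow_finrank_zero hmain
  rw [Module.finrank_fin_fun, hkey] at hz
  rw [← map_pow] at hz
  have := E.injective (a₁ := ((↑h : Matrix (Fin m) (Fin m) ℂ) - 1) ^ m) (a₂ := 0)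
  rw [map_zero] at this
  exact this hz
end

section
/- Let H and G be topological groups and let π : H → G be a continuous surjective group homomorphism which is a covering map. Let Γ be a group and for each t ∈ [0,1] let ρ_t : Γ → G be a group homomorphism such that for every γ ∈ Γ the map t ↦ ρ_t(γ) is continuous. Suppose ρ̃₀ : Γ → H is a group homomorphism with π ∘ ρ̃₀ = ρ₀. Then there exists a family of group homomorphisms ρ̃_t : Γ → H, t ∈ [0,1], such that π ∘ ρ̃_t = ρ_t for all t, the map t ↦ ρ̃_t(γ) is continuous for every γ ∈ Γ, and ρ̃_t agrees at t = 0 with the given lift ρ̃₀. In particular, every homomorphism ρ : Γ → G joined to ρ₀ by such a path lifts to a homomorphism ρ̃ : Γ → H with π ∘ ρ̃ = ρ. -/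
open Set

/-- Path lifting through a covering map, for paths parametrized by `Set.Icc (0:ℝ) 1`. -/
theorem covlift {E X : Type*} [TopologicalSpace E] [TopologicalSpace X] {f : E → X}
    (hf : IsCoveringMap f) (p : Set.Icc (0 : ℝ) 1 → X) (hp : Continuous p)
    (e₀ : E) (he : f e₀ = p ⟨0, by norm_num⟩) :
    ∃ g : Set.Icc (0 : ℝ) 1 → E, Continuous g ∧ (∀ s, f (g s) = p s) ∧
      g ⟨0, by norm_num⟩ = e₀ := by
  let I := ↥(Set.Icc (0 : ℝ) 1)
  set z0 : I := ⟨0, by norm_num⟩ with hz0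
  set S : Set ℝ := {t | t ∈ Set.Icc (0 : ℝ) 1 ∧ ∃ g : I → E,
      ContinuousOn g {s : I | (s : ℝ) ≤ t} ∧ (∀ s : I, (s : ℝ) ≤ t → f (g s) = p s) ∧
      g z0 = e₀} with hS
  have h0S : (0 : ℝ) ∈ S := by
    refine ⟨by norm_num, fun _ => e₀, continuousOn_const, fun s hs => ?_, rfl⟩
    have : s = z0 := Subtype.ext (le_antisymm hs s.2.1)
    rw [this, he]
  have bddS : BddAbove S := ⟨1, fun t ht => ht.1.2⟩
  have hne : S.Nonempty := ⟨0, h0S⟩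
  set T : ℝ := sSup S with hTdef
  have hT0 : 0 ≤ T := le_csSup bddS h0S
  have hT1 : T ≤ 1 := csSup_le hne fun t ht => ht.1.2
  set tT : I := ⟨T, hT0, hT1⟩ with htT
  haveI : Nonempty (f ⁻¹' {p tT}) := by
    obtain ⟨-, U, hU, hUo, -, Hh, -⟩ := hf (p tT)
    obtain ⟨ε, hε, hball⟩ := Metric.isOpen_iff.1 (hUo.preimage hp) tT hU
    obtain ⟨t, htS, htT'⟩ := exists_lt_of_lt_csSup hne (show T - ε < T by linarith)
    have htle : t ≤ T := le_csSup bddS htS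
    obtain ⟨⟨ht0, ht1⟩, g, -, hgl, -⟩ := htS
    have hin : f (g ⟨t, ht0, ht1⟩) ∈ U := by
      rw [hgl _ le_rfl]; apply hball
      have : dist (⟨t, ht0, ht1⟩ : I) tT = |t - T| := rfl
      rw [Metric.mem_ball, this, abs_lt]; constructor <;> linarith
    exact ⟨(Hh ⟨_, hin⟩).2⟩
  obtain ⟨triv, hmem⟩ : ∃ triv : Bundle.Trivialization (f ⁻¹' {p tT}) f, p tT ∈ triv.baseSet :=
    ⟨_, (hf (p tT)).mem_toTrivialization_baseSet⟩
  -- find δ > 0 such that points within δ of T map into the base set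
  have hopen : IsOpen (p ⁻¹' triv.baseSet) := triv.open_baseSet.preimage hp
  obtain ⟨ε, hε, hball⟩ := Metric.isOpen_iff.1 hopen tT hmem
  set δ : ℝ := ε / 2 with hδ
  have hδ0 : 0 < δ := by positivity
  have hV : ∀ s : I, |(s : ℝ) - T| ≤ δ → p s ∈ triv.baseSet := by
    intro s hs
    apply hball
    have : dist s tT = |(s : ℝ) - T| := rfl
    rw [Metric.mem_ball, this]
    linarith
  -- pick an element of S close to T
  obtain ⟨t, htS, htT'⟩ := exists_lt_of_lt_csSup hne (show T - δ < T by linarith)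
  have htle : t ≤ T := le_csSup bddS htS
  obtain ⟨⟨ht0, ht1⟩, g, hgc, hgl, hg0⟩ := htS
  set tI : I := ⟨t, ht0, ht1⟩ with htI
  have hptb : p tI ∈ triv.baseSet := hV tI (by rw [abs_le]; constructor <;> simp <;> linarith)
  have hgsrc : g tI ∈ triv.source := by
    rw [triv.mem_source, hgl tI le_rfl]; exact hptb
  -- the extension on the right
  set c : E := g tI with hc
  set h : I → E := fun s => triv.toOpenPartialHomeomorph.symm (p s, (triv c).2) with hh
  have hhl : ∀ s : I, p s ∈ triv.baseSet → f (h s) = p s := fun s hs =>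
    triv.proj_symm_apply (triv.mem_target.2 hs)
  have hht : h tI = c := by
    have h1 : f c = p tI := hgl tI le_rfl
    have : ((p tI : X), (triv c).2) = triv c := by rw [← h1]; exact triv.mk_proj_snd' (h1 ▸ hptb)
    rw [hh]; simp only
    rw [this]; exact triv.toOpenPartialHomeomorph.left_inv hgsrc
  have hhc : ContinuousOn h {s : I | |(s : ℝ) - T| ≤ δ} := by
    apply triv.toOpenPartialHomeomorph.continuousOn_symm.comp
      ((hp.prodMk continuous_const).continuousOn)
    intro s hs
    rw [triv.mem_target]
    exact hV s hs
  -- the glued function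
  set t' : ℝ := min (T + δ) 1 with ht'
  have ht'1 : t' ≤ 1 := min_le_right _ _
  have ht'0 : 0 ≤ t' := le_min (by linarith) (by norm_num)
  classical
  set g' : I → E := fun s => if (s : ℝ) ≤ t then g s else h s with hg'
  have ht'S : t' ∈ S := by
    refine ⟨⟨ht'0, ht'1⟩, g', ?_, ?_, ?_⟩
    · -- continuity
      apply ContinuousOn.if
      · intro a ⟨ha1, ha2⟩
        have : (a : ℝ) = t := frontier_le_subset_eq (by fun_prop) continuous_const ha2
        have haI : a = tI := Subtype.ext this
        rw [haI, hht]
      · apply hgc.mono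
        intro a ⟨ha1, ha2⟩
        have : IsClosed {s : I | (s : ℝ) ≤ t} := isClosed_le (by fun_prop) continuous_const
        exact this.closure_eq ▸ ha2
      · apply hhc.mono
        intro a ⟨ha1, ha2⟩
        have hcl : closure {s : I | ¬ (s : ℝ) ≤ t} ⊆ {s : I | t ≤ (s : ℝ)} := by
          apply closure_minimal _ (isClosed_le continuous_const (by fun_prop))
          intro x hx; exact le_of_lt (not_le.1 hx)
        have h2 : t ≤ (a : ℝ) := hcl ha2
        have h3 : (a : ℝ) ≤ t' := ha1
        rw [mem_setOf_eq, abs_le]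
        constructor
        · linarith
        · have := min_le_left (T + δ) 1; linarith
    · -- lifting
      intro s hs
      rw [hg']; simp only
      by_cases hst : (s : ℝ) ≤ t
      · rw [if_pos hst]; exact hgl s hst
      · rw [if_neg hst]
        apply hhl
        apply hV
        rw [abs_le]
        push_neg at hst
        have := min_le_left (T + δ) 1
        constructor <;> linarith
    · rw [hg']; simp only
      rw [if_pos (show ((z0 : I) : ℝ) ≤ t from ht0), hg0]
  -- conclude T = 1 and 1 ∈ S
  have ht'le : t' ≤ T := le_csSup bddS ht'S
  have hT1' : T = 1 := by
    rcases le_or_gt (T + δ) 1 with h1 | h1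
    · exfalso; rw [ht', min_eq_left h1] at ht'le; linarith
    · have h2 : t' = 1 := min_eq_right (le_of_lt h1)
      rw [h2] at ht'le; linarith
  have h1S : (1 : ℝ) ∈ S := by
    have : t' = 1 := by rw [ht', min_eq_right]; linarith
    rwa [this] at ht'S
  obtain ⟨-, g, hgc, hgl, hg0⟩ := h1S
  have huniv : {s : I | (s : ℝ) ≤ 1} = univ := eq_univ_of_forall fun s => s.2.2
  rw [huniv] at hgc
  exact ⟨g, continuousOn_univ.1 hgc, fun s => hgl s s.2.2, hg0⟩


/-- Let `π : H → G` be a continuous surjective group homomorphism between topological groups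
which is a covering map, and let `ρ_t : Γ → G`, `t ∈ [0,1]`, be a family of homomorphisms
of a group `Γ` such that `t ↦ ρ_t γ` is continuous for each `γ`. Given a homomorphic lift
`ρ̃₀ : Γ → H` of `ρ₀`, there is a family of homomorphisms `ρ̃_t : Γ → H` lifting `ρ_t`
(`π ∘ ρ̃_t = ρ_t`), pointwise continuous in `t`, and agreeing with `ρ̃₀` at `t = 0`.
In particular every `ρ_t` (e.g. `ρ_1`) lifts to a homomorphism `Γ → H`. -/
theorem stmt10 {H G : Type*} [Group H] [TopologicalSpace H] [IsTopologicalGroup H]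
    [Group G] [TopologicalSpace G] [IsTopologicalGroup G]
    (π : H →* G) (hcont : Continuous π) (hsurj : Function.Surjective π)
    (hcov : IsCoveringMap (⇑π))
    {Γ : Type*} [Group Γ]
    (ρ : Set.Icc (0 : ℝ) 1 → (Γ →* G))
    (hρ : ∀ γ : Γ, Continuous fun t => ρ t γ)
    (ρ₀ : Γ →* H) (h0 : π.comp ρ₀ = ρ ⟨0, by norm_num⟩) :
    ∃ ρlift : Set.Icc (0 : ℝ) 1 → (Γ →* H),
      (∀ t, π.comp (ρlift t) = ρ t) ∧
      (∀ γ : Γ, Continuous fun t => ρlift t γ) ∧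
      ρlift ⟨0, by norm_num⟩ = ρ₀ := by
  haveI : PreconnectedSpace (Set.Icc (0 : ℝ) 1) :=
    Subtype.preconnectedSpace isPreconnected_Icc
  have key : ∀ γ : Γ, ∃ g : Set.Icc (0 : ℝ) 1 → H, Continuous g ∧
      (∀ t, π (g t) = ρ t γ) ∧ g ⟨0, by norm_num⟩ = ρ₀ γ := fun γ =>
    covlift hcov (fun t => ρ t γ) (hρ γ) (ρ₀ γ) (DFunLike.congr_fun h0 γ)
  choose L hLc hLl hL0 using key
  have hmul : ∀ γ δ : Γ, L (γ * δ) = fun t => L γ t * L δ t := by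
    intro γ δ
    refine hcov.eq_of_comp_eq (hLc _) ((hLc γ).mul (hLc δ)) ?_ ⟨0, by norm_num⟩ ?_
    · funext t
      show π (L (γ * δ) t) = π (L γ t * L δ t)
      rw [map_mul, hLl, hLl, hLl, map_mul]
    · show L (γ * δ) _ = L γ _ * L δ _
      rw [hL0, hL0, hL0, map_mul]
  refine ⟨fun t => MonoidHom.mk' (fun γ => L γ t) (fun γ δ => congrFun (hmul γ δ) t),
    fun t => ?_, fun γ => hLc γ, ?_⟩
  · ext γ; exact hLl γ t
  · ext γ; exact hL0 γ
end
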